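/- Multiplication by a smooth cutoff does not increase the semiclassical band limit: Let B ≥ 0 and let (g_h)_{h∈(0,1]} be a family of integrable functions on ℝ with ‖g_h‖_{L¹} ≤ C h^{−M} for some C, M, such that for every N there is C_N with |𝓕_h g_h(ξ)| ≤ C_N h^N (1 + |ξ|)^{−N} for all h and all |ξ| ≥ B. Then for every Schwartz function χ on ℝ and every B′ > B, for every N there is C′ such that |𝓕_h (χ g_h)(ξ)| ≤ C′ h^N (1 + |ξ|)^{−N} for all h ∈ (0,1] and all |ξ| ≥ B′. -/

import Mathlib

open MeasureTheory Real FourierTransform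

noncomputable section

/-- The semiclassical Fourier transform `𝓕_h g(ξ) = ∫ e^{−i x ξ/h} g(x) dx`. -/
def FTh (h : ℝ) (g : ℝ → ℂ) (ξ : ℝ) : ℂ :=
  ∫ x : ℝ, Complex.exp (-(Complex.I * (x : ℂ) * (ξ : ℂ) / (h : ℂ))) * g x

lemma normExpA (a b c : ℝ) : ‖Complex.exp (-(Complex.I * a * b / c))‖ = 1 := by
  rw [show -(Complex.I * (a:ℂ) * b / c) = ((-(a*b/c) : ℝ) : ℂ) * Complex.I by push_cast; ring,
    Complex.norm_exp_ofReal_mul_I]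

lemma normExpB (a : ℝ) : ‖Complex.exp ((a:ℂ) * Complex.I)‖ = 1 := by
  rw [Complex.norm_exp_ofReal_mul_I]

lemma inv_schwartz (χ : SchwartzMap ℝ ℂ) (x : ℝ) :
    χ x = ∫ t : ℝ, Complex.exp (((2*π*(t*x) : ℝ) : ℂ) * Complex.I) *
      (SchwartzMap.fourierTransformCLM ℂ χ) t := by
  have h1 : 𝓕⁻ (𝓕 ⇑χ) = ⇑χ :=
    Continuous.fourierInv_fourier_eq χ.continuous χ.integrable
      (by rw [show 𝓕 ⇑χ = ⇑(SchwartzMap.fourierTransformCLM ℂ χ) by simp [SchwartzMap.fourier_coe]]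
          exact (SchwartzMap.fourierTransformCLM ℂ χ).integrable)
  conv_lhs => rw [← h1]
  rw [Real.fourierInv_eq']
  simp [RCLike.inner_apply, Circle.smul_def, smul_eq_mul, SchwartzMap.fourier_coe, mul_comm]

lemma FTh_norm_le (h : ℝ) (g : ℝ → ℂ) (ξ : ℝ) : ‖FTh h g ξ‖ ≤ ∫ x : ℝ, ‖g x‖ := by
  refine (norm_integral_le_integral_norm _).trans_eq ?_
  congr 1; funext x; rw [norm_mul, normExpA, one_mul]

lemma FTh_mul_key (χ : SchwartzMap ℝ ℂ) {g : ℝ → ℂ} (hg : Integrable g) {h : ℝ} (hh : 0 < h)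
    (ξ : ℝ) :
    FTh h (fun x => χ x * g x) ξ
      = ∫ t : ℝ, (SchwartzMap.fourierTransformCLM ℂ χ) t * FTh h g (ξ - 2*π*h*t) := by
  set Φ := SchwartzMap.fourierTransformCLM ℂ χ with hΦ
  have step1 : FTh h (fun x => χ x * g x) ξ
      = ∫ x : ℝ, ∫ t : ℝ, Complex.exp (-(Complex.I * (x:ℂ) * (ξ:ℂ) / (h:ℂ))) *
          (Complex.exp (((2*π*(t*x) : ℝ) : ℂ) * Complex.I) * Φ t * g x) := by
    unfold FTh
    congr 1; funext x
    simp only []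
    rw [inv_schwartz χ x, ← hΦ]
    rw [show Complex.exp (-(Complex.I*(x:ℂ)*ξ/h)) *
          ((∫ t:ℝ, Complex.exp (((2*π*(t*x):ℝ):ℂ) * Complex.I) * Φ t) * g x)
        = (Complex.exp (-(Complex.I*(x:ℂ)*ξ/h)) * g x) *
          (∫ t:ℝ, Complex.exp (((2*π*(t*x):ℝ):ℂ) * Complex.I) * Φ t) by ring,
      ← integral_const_mul]
    congr 1; funext t; ring
  rw [step1]
  have hint : Integrable (Function.uncurry fun (x t : ℝ) =>
      Complex.exp (-(Complex.I * (x:ℂ) * (ξ:ℂ) / (h:ℂ))) *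
        (Complex.exp (((2*π*(t*x) : ℝ) : ℂ) * Complex.I) * Φ t * g x))
      (volume.prod volume) := by
    have hmeas : AEStronglyMeasurable (Function.uncurry fun (x t : ℝ) =>
        Complex.exp (-(Complex.I * (x:ℂ) * (ξ:ℂ) / (h:ℂ))) *
          (Complex.exp (((2*π*(t*x) : ℝ) : ℂ) * Complex.I) * Φ t * g x))
        (volume.prod volume) := by
      apply AEStronglyMeasurable.mul
      · exact (Continuous.aestronglyMeasurable (by fun_prop))
      · apply AEStronglyMeasurable.mul
        · exact (Continuous.aestronglyMeasurable (by fun_prop))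
        · exact hg.1.comp_fst
    refine (hg.norm.mul_prod Φ.integrable.norm).mono' hmeas ?_
    filter_upwards with p
    simp only [Function.uncurry]
    rw [norm_mul, norm_mul, norm_mul, normExpA, normExpB, one_mul, one_mul]
    exact le_of_eq (mul_comm _ _)
  rw [integral_integral_swap hint]
  congr 1; funext t
  unfold FTh
  rw [← integral_const_mul]
  congr 1; funext x
  rw [show Complex.exp (-(Complex.I * (x:ℂ) * (ξ:ℂ) / (h:ℂ))) *
        (Complex.exp (((2*π*(t*x) : ℝ) : ℂ) * Complex.I) * Φ t * g x)
      = Φ t * ((Complex.exp (-(Complex.I * (x:ℂ) * (ξ:ℂ) / (h:ℂ))) *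
          Complex.exp (((2*π*(t*x) : ℝ) : ℂ) * Complex.I)) * g x) by ring,
    ← Complex.exp_add]
  congr 2
  have hh' : (h:ℂ) ≠ 0 := Complex.ofReal_ne_zero.mpr hh.ne'
  push_cast
  field_simp
  ring

lemma integrable_W (φ : SchwartzMap ℝ ℂ) (K : ℕ) :
    Integrable (fun t : ℝ => (1+|t|)^K * ‖φ t‖) := by
  have h1 : Integrable (fun t : ℝ => (2:ℝ)^K * ‖φ t‖) :=
    (φ.integrable (μ := volume)).norm.const_mul _
  have h2 : Integrable (fun t : ℝ => (2:ℝ)^K * (‖t‖^K * ‖φ t‖)) :=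
    (φ.integrable_pow_mul (μ := volume) K).const_mul _
  refine (h1.add h2).mono' ?_ ?_
  · exact Continuous.aestronglyMeasurable (by fun_prop)
  · filter_upwards with t
    have h0 : (0:ℝ) ≤ ‖φ t‖ := norm_nonneg _
    have hb : (1+|t|)^K ≤ 2^K * (1 + |t|^K) := by
      calc (1+|t|)^K ≤ (2 * max 1 |t|)^K := by
            apply pow_le_pow_left₀ (by positivity)
            rcases le_total 1 |t| with h|h
            · rw [max_eq_right h]; linarith
            · rw [max_eq_left h]; linarith
        _ = 2^K * (max 1 |t|)^K := mul_pow _ _ _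
        _ ≤ 2^K * (1 + |t|^K) := by
            gcongr
            rcases le_total 1 |t| with h|h
            · rw [max_eq_right h]; linarith
            · rw [max_eq_left h, one_pow]; linarith [pow_nonneg (abs_nonneg t) K]
    rw [Real.norm_of_nonneg (by positivity)]
    calc (1+|t|)^K * ‖φ t‖ ≤ (2^K * (1 + |t|^K)) * ‖φ t‖ := by gcongr
      _ = 2^K * ‖φ t‖ + 2^K * (‖t‖^K * ‖φ t‖) := by rw [Real.norm_eq_abs]; ring

lemma case1_scalar {C₁ h P Q R A : ℝ} (hh : 0 < h) (hP : 1 ≤ P) (hQ : 1 ≤ Q) (hR : 1 ≤ R)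
    (N K : ℕ) (hNK : N ≤ K) (hPQR : P ≤ 7*Q*R) (hA : |C₁| * 7^N ≤ A) :
    C₁ * h^N / Q^N ≤ h^N / P^N * (A * R^K) := by
  have hP0 : (0:ℝ) < P := lt_of_lt_of_le one_pos hP
  have hQ0 : (0:ℝ) < Q := lt_of_lt_of_le one_pos hQ
  have hR0 : (0:ℝ) < R := lt_of_lt_of_le one_pos hR
  rw [div_mul_eq_mul_div, div_le_div_iff₀ (by positivity) (by positivity)]
  calc C₁ * h^N * P^N ≤ |C₁| * h^N * P^N :=
        mul_le_mul_of_nonneg_right (mul_le_mul_of_nonneg_right (le_abs_self C₁)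
          (by positivity)) (by positivity)
    _ ≤ |C₁| * h^N * (7*Q*R)^N :=
        mul_le_mul_of_nonneg_left (pow_le_pow_left₀ hP0.le hPQR N) (by positivity)
    _ = (|C₁| * 7^N) * R^N * (h^N * Q^N) := by rw [mul_pow, mul_pow]; ring
    _ ≤ (A * R^K) * (h^N * Q^N) :=
        mul_le_mul_of_nonneg_right (mul_le_mul hA (pow_le_pow_right₀ hR hNK)
          (by positivity) (le_trans (by positivity) hA)) (by positivity)
    _ = h^N * (A * R^K) * Q^N := by ring

lemma case2_scalar {C₂ h P R δ E A : ℝ} {N M K : ℕ} (hh : 0 < h) (hP : 1 ≤ P) (hR : 1 ≤ R)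
    (hδ : 0 < δ) (hE : 1 ≤ E) (hK : K = 2*N + M) (hPE : P ≤ E * R) (hhR : δ ≤ 7*R*h)
    (hA : |C₂| * (7/δ)^(N+M) * E^N ≤ A) :
    |C₂| / h^M ≤ h^N / P^N * (A * R^K) := by
  have hP0 : (0:ℝ) < P := lt_of_lt_of_le one_pos hP
  have hR0 : (0:ℝ) < R := lt_of_lt_of_le one_pos hR
  have hE0 : (0:ℝ) < E := lt_of_lt_of_le one_pos hE
  have hA0 : (0:ℝ) ≤ A := le_trans (by positivity) hA
  rw [div_mul_eq_mul_div, div_le_div_iff₀ (by positivity) (by positivity)]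
  have key : |C₂| * P^N * (7^(N+M) * R^(N+M)) ≤ (h^N * (A * R^K) * h^M) * (7^(N+M) * R^(N+M)) := by
    have e1 : δ^(N+M) ≤ 7^(N+M) * R^(N+M) * (h^N * h^M) := by
      calc δ^(N+M) ≤ (7*R*h)^(N+M) := pow_le_pow_left₀ hδ.le hhR _
        _ = 7^(N+M) * R^(N+M) * (h^N * h^M) := by rw [pow_add]; ring
    have e2 : |C₂| * E^N * 7^(N+M) ≤ A * δ^(N+M) := by
      have : (|C₂| * (7/δ)^(N+M) * E^N) * δ^(N+M) = |C₂| * E^N * 7^(N+M) := by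
        rw [div_pow]; field_simp
      rw [← this]
      exact mul_le_mul_of_nonneg_right hA (by positivity)
    have e3 : P^N ≤ E^N * R^N := by rw [← mul_pow]; exact pow_le_pow_left₀ hP0.le hPE N
    have e4 : R^K = R^N * R^(N+M) := by rw [← pow_add]; congr 1; omega
    calc |C₂| * P^N * (7^(N+M) * R^(N+M))
        ≤ |C₂| * (E^N * R^N) * (7^(N+M) * R^(N+M)) :=
          mul_le_mul_of_nonneg_right (mul_le_mul_of_nonneg_left e3 (abs_nonneg _)) (by positivity)
      _ = (|C₂| * E^N * 7^(N+M)) * (R^N * R^(N+M)) := by ring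
      _ ≤ (A * δ^(N+M)) * (R^N * R^(N+M)) :=
          mul_le_mul_of_nonneg_right e2 (by positivity)
      _ = A * R^K * δ^(N+M) := by rw [e4]; ring
      _ ≤ A * R^K * (7^(N+M) * R^(N+M) * (h^N * h^M)) :=
          mul_le_mul_of_nonneg_left e1 (by positivity)
      _ = (h^N * (A * R^K) * h^M) * (7^(N+M) * R^(N+M)) := by ring
  exact le_of_mul_le_mul_right key (by positivity)

set_option maxHeartbeats 1000000 in
theorem cutoff_preserves_band_limit (B : ℝ) (hB : 0 ≤ B)
    (g : ℝ → ℝ → ℂ)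
    (hg_int : ∀ h ∈ Set.Ioc (0:ℝ) 1, Integrable (g h))
    (hg_L1 : ∃ C : ℝ, ∃ M : ℕ, ∀ h ∈ Set.Ioc (0:ℝ) 1, (∫ x : ℝ, ‖g h x‖) ≤ C / h ^ M)
    (hband : ∀ N : ℕ, ∃ C : ℝ, ∀ h ∈ Set.Ioc (0:ℝ) 1, ∀ ξ : ℝ, B ≤ |ξ| →
      ‖FTh h (g h) ξ‖ ≤ C * h ^ N / (1 + |ξ|) ^ N) :
    ∀ χ : SchwartzMap ℝ ℂ, ∀ B' : ℝ, B < B' → ∀ N : ℕ, ∃ C' : ℝ,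
      ∀ h ∈ Set.Ioc (0:ℝ) 1, ∀ ξ : ℝ, B' ≤ |ξ| →
        ‖FTh h (fun x => χ x * g h x) ξ‖ ≤ C' * h ^ N / (1 + |ξ|) ^ N := by
  intro χ B' hBB' N
  obtain ⟨C₂, M, hC₂⟩ := hg_L1
  obtain ⟨C₁, hC₁⟩ := hband N
  set Φ := SchwartzMap.fourierTransformCLM ℂ χ with hΦ
  set δ := B' - B with hδdef
  have hδ : 0 < δ := sub_pos.mpr hBB'
  set E : ℝ := 7*(1+B) with hEdef
  have hE : 1 ≤ E := by simp only [hEdef]; linarith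
  set K := 2*N + M with hKdef
  set A : ℝ := |C₁| * 7^N + |C₂| * (7/δ)^(N+M) * E^N with hAdef
  have hA1 : |C₁| * 7^N ≤ A := by
    simp only [hAdef]
    have : (0:ℝ) ≤ |C₂| * (7/δ)^(N+M) * E^N := by positivity
    linarith
  have hA2 : |C₂| * (7/δ)^(N+M) * E^N ≤ A := by
    simp only [hAdef]
    have : (0:ℝ) ≤ |C₁| * 7^N := by positivity
    linarith
  refine ⟨A * ∫ t : ℝ, (1+|t|)^K * ‖Φ t‖, ?_⟩
  intro h hh ξ hξ
  obtain ⟨hh0, hh1⟩ := hh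
  have hπ7 : 2*π*h ≤ 7 := by nlinarith [Real.pi_lt_d2, Real.pi_gt_three]
  have hP : (1:ℝ) ≤ 1 + |ξ| := by linarith [abs_nonneg ξ]
  have hP0 : (0:ℝ) < 1 + |ξ| := lt_of_lt_of_le one_pos hP
  rw [FTh_mul_key χ (hg_int h ⟨hh0, hh1⟩) hh0 ξ]
  have hptwise : ∀ t : ℝ, ‖Φ t * FTh h (g h) (ξ - 2*π*h*t)‖
      ≤ (h^N / (1+|ξ|)^N) * (A * ((1+|t|)^K * ‖Φ t‖)) := by
    intro t
    rw [norm_mul]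
    set η := ξ - 2*π*h*t with hηdef
    have hR : (1:ℝ) ≤ 1 + |t| := by linarith [abs_nonneg t]
    have hQ : (1:ℝ) ≤ 1 + |η| := by linarith [abs_nonneg η]
    have habs1 : |ξ| ≤ |η| + 2*π*h*|t| := by
      have h1 : ξ = η + 2*π*h*t := by rw [hηdef]; ring
      calc |ξ| = |η + 2*π*h*t| := by rw [← h1]
        _ ≤ |η| + |2*π*h*t| := abs_add_le _ _
        _ = |η| + 2*π*h*|t| := by
            rw [abs_mul, abs_of_nonneg (by positivity : (0:ℝ) ≤ 2*π*h)]
    have habs2 : 2*π*h*|t| ≤ 7*|t| := mul_le_mul_of_nonneg_right hπ7 (abs_nonneg t)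
    by_cases hcase : B ≤ |η|
    · have hF := hC₁ h ⟨hh0, hh1⟩ η hcase
      have hPQR : 1 + |ξ| ≤ 7*(1+|η|)*(1+|t|) := by
        nlinarith [abs_nonneg η, abs_nonneg t, mul_nonneg (abs_nonneg η) (abs_nonneg t)]
      have hs := case1_scalar hh0 hP hQ hR N K (by omega) hPQR hA1
      calc ‖Φ t‖ * ‖FTh h (g h) η‖ ≤ ‖Φ t‖ * (C₁ * h^N / (1+|η|)^N) :=
            mul_le_mul_of_nonneg_left hF (norm_nonneg _)
        _ ≤ ‖Φ t‖ * (h^N / (1+|ξ|)^N * (A * (1+|t|)^K)) :=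
            mul_le_mul_of_nonneg_left hs (norm_nonneg _)
        _ = (h^N / (1+|ξ|)^N) * (A * ((1+|t|)^K * ‖Φ t‖)) := by ring
    · push_neg at hcase
      have hF : ‖FTh h (g h) η‖ ≤ |C₂| / h^M := by
        refine (FTh_norm_le h (g h) η).trans ((hC₂ h ⟨hh0, hh1⟩).trans ?_)
        gcongr
        exact le_abs_self C₂
      have hPE : 1 + |ξ| ≤ E * (1+|t|) := by
        have hBt : 0 ≤ B * |t| := mul_nonneg hB (abs_nonneg t)
        have h5 : 1 + |ξ| ≤ 1 + B + 7*|t| := by linarith [hcase.le]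
        simp only [hEdef]
        nlinarith [abs_nonneg t]
      have hhR : δ ≤ 7*(1+|t|)*h := by
        have h1 : |ξ| - |η| ≤ |ξ - η| := abs_sub_abs_le_abs_sub ξ η
        have h2 : |ξ - η| = 2*π*h*|t| := by
          rw [show ξ - η = 2*π*h*t by rw [hηdef]; ring, abs_mul,
            abs_of_nonneg (by positivity : (0:ℝ) ≤ 2*π*h)]
        have h3 : 2*π*h*|t| ≤ 7*h*|t| := by
          have h3a : 2*π ≤ 7 := by nlinarith [Real.pi_lt_d2]
          have := mul_le_mul_of_nonneg_right h3a (mul_nonneg hh0.le (abs_nonneg t))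
          linarith
        have h4 : 7*h*|t| ≤ 7*(1+|t|)*h := by nlinarith [abs_nonneg t, hh0.le]
        simp only [hδdef]
        linarith
      have hs := case2_scalar (M := M) hh0 hP hR hδ hE hKdef hPE hhR hA2
      calc ‖Φ t‖ * ‖FTh h (g h) η‖ ≤ ‖Φ t‖ * (|C₂| / h^M) :=
            mul_le_mul_of_nonneg_left hF (norm_nonneg _)
        _ ≤ ‖Φ t‖ * (h^N / (1+|ξ|)^N * (A * (1+|t|)^K)) :=
            mul_le_mul_of_nonneg_left hs (norm_nonneg _)
        _ = (h^N / (1+|ξ|)^N) * (A * ((1+|t|)^K * ‖Φ t‖)) := by ring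
  calc ‖∫ t : ℝ, Φ t * FTh h (g h) (ξ - 2*π*h*t)‖
      ≤ ∫ t : ℝ, ‖Φ t * FTh h (g h) (ξ - 2*π*h*t)‖ := norm_integral_le_integral_norm _
    _ ≤ ∫ t : ℝ, (h^N / (1+|ξ|)^N) * (A * ((1+|t|)^K * ‖Φ t‖)) := by
        refine integral_mono_of_nonneg (Filter.Eventually.of_forall fun t => norm_nonneg _)
          ?_ (Filter.Eventually.of_forall hptwise)
        exact ((integrable_W Φ K).const_mul A).const_mul _
    _ = (h^N / (1+|ξ|)^N) * (A * ∫ t : ℝ, (1+|t|)^K * ‖Φ t‖) := by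
        rw [integral_const_mul, integral_const_mul]
    _ = (A * ∫ t : ℝ, (1+|t|)^K * ‖Φ t‖) * h^N / (1+|ξ|)^N := by ring
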